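/- If β > 1/2, then for any integer k ≥ (2β+1)/(2β−1) and any n ≥ k², every binary sequence of length n contains a β-repeat of length ℓ·⌊n/k²⌋ for some ℓ ∈ {1, …, k}. -/

import Mathlib

open Finset

/-- Hamming distance between two binary lists (of the same length). -/
def hdist (x y : List Bool) : ℕ := (List.zip x y).countP (fun p => p.1 != p.2)

/-- `s` contains a `β`-repeat of length `h`: two adjacent blocks, each of length `h`,
at Hamming distance at most `β·h`. -/
def HasBetaRepeat (β : ℝ) (h : ℕ) (s : List Bool) : Prop :=
  ∃ a b b' c : List Bool, b.length = h ∧ b'.length = h ∧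
    (hdist b b' : ℝ) ≤ β * h ∧ s = a ++ (b ++ b') ++ c

lemma hdist_eq_sum (x y : List Bool) (h : x.length = y.length) :
    hdist x y = ∑ t ∈ range x.length,
      (if x.getD t false = y.getD t false then 0 else 1) := by
  induction x generalizing y with
  | nil => simp [hdist]
  | cons a x ih =>
    cases y with
    | nil => simp at h
    | cons b y =>
      simp only [List.length_cons, Nat.add_right_cancel_iff] at h
      have : hdist (a :: x) (b :: y) = hdist x y + (if a = b then 0 else 1) := by
        simp only [hdist, List.zip_cons_cons, List.countP_cons]
        cases a <;> cases b <;> simp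
      rw [this, ih y h, List.length_cons, Finset.sum_range_succ']
      simp [List.getD_cons_succ, List.getD_cons_zero, Nat.add_comm]

lemma sum_range_mul_split {M : Type*} [AddCommMonoid M] (f : ℕ → M) (a b : ℕ) :
    ∑ p ∈ range (a * b), f p = ∑ r ∈ range a, ∑ t ∈ range b, f (r * b + t) := by
  induction a with
  | zero => simp
  | succ a ih =>
    rw [Nat.succ_mul, Finset.sum_range_add, ih, Finset.sum_range_succ]

/-- counting unequal pairs among `K` booleans -/
lemma pair_count (b : ℕ → Bool) (K : ℕ) :
    ((∑ j ∈ range K, ∑ i ∈ range j,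
      (if b i = b j then (0:ℕ) else 1) : ℕ) : ℤ) * 4 ≤ (K : ℤ) ^ 2 := by
  set w : ℕ → ℤ := fun K => ∑ i ∈ range K, (if b i then 1 else 0) with hw
  have hw0 : ∀ K, 0 ≤ w K := by
    intro K; apply Finset.sum_nonneg; intro i _; positivity
  have hwK : ∀ K, w K ≤ K := by
    intro K
    calc w K ≤ ∑ _i ∈ range K, (1:ℤ) := by
          apply Finset.sum_le_sum; intro i _; split <;> norm_num
      _ = K := by simp
  have key : ∀ K, ((∑ j ∈ range K, ∑ i ∈ range j,
      (if b i = b j then (0:ℕ) else 1) : ℕ) : ℤ) = w K * (K - w K) := by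
    intro K
    induction K with
    | zero => simp [hw]
    | succ K ih =>
      rw [Finset.sum_range_succ, Nat.cast_add, ih]
      have hsplit : ((∑ i ∈ range K, (if b i = b K then (0:ℕ) else 1) : ℕ) : ℤ)
          = if b K then (K : ℤ) - w K else w K := by
        push_cast
        cases hbK : b K with
        | true =>
          simp only [if_true]
          have : ∀ i, ((if b i = true then (0:ℤ) else 1)) = 1 - (if b i then 1 else 0) := by
            intro i; cases b i <;> simp
          rw [Finset.sum_congr rfl (fun i _ => this i), Finset.sum_sub_distrib]
          simp [hw]
        | false =>
          have : ∀ i, ((if b i = false then (0:ℤ) else 1)) = (if b i then 1 else 0) := by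
            intro i; cases b i <;> simp
          rw [Finset.sum_congr rfl (fun i _ => this i)]
          simp [hw]
      rw [hsplit]
      have hwsucc : w (K + 1) = w K + (if b K then 1 else 0) := by
        simp only [hw]; rw [Finset.sum_range_succ]
      cases hbK : b K <;> simp only [hbK, if_true, if_false] at hwsucc ⊢ <;>
        · rw [hwsucc]; push_cast; ring
  rw [key K]
  nlinarith [hw0 K, hwK K, sq_nonneg (2 * w K - (K : ℤ))]

lemma getD_slice (l : List Bool) (c h t : ℕ) (ht : t < h) (hch : c + h ≤ l.length) :
    ((l.drop c).take h).getD t false = l.getD (c + t) false := by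
  have h1 : t < ((l.drop c).take h).length := by simp; omega
  have h2 : c + t < l.length := by omega
  rw [List.getD_eq_getElem _ _ h1, List.getD_eq_getElem _ _ h2]
  simp

lemma window_lb (β : ℝ) (s : List Bool) (h c : ℕ) (hc : c + 2 * h ≤ s.length)
    (hno : ¬ HasBetaRepeat β h s) :
    β * h < ((∑ t ∈ range h,
      (if s.getD (c + t) false = s.getD (c + h + t) false then (0:ℕ) else 1) : ℕ) : ℝ) := by
  by_contra hle
  push_neg at hle
  apply hno
  refine ⟨s.take c, (s.drop c).take h, (s.drop (c + h)).take h, s.drop (c + 2 * h), ?_, ?_, ?_, ?_⟩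
  · simp; omega
  · simp; omega
  · have hd : hdist ((s.drop c).take h) ((s.drop (c + h)).take h)
        = ∑ t ∈ range h,
          (if s.getD (c + t) false = s.getD (c + h + t) false then (0:ℕ) else 1) := by
      have hlen1 : ((s.drop c).take h).length = h := by simp; omega
      have hlen2 : ((s.drop (c + h)).take h).length = h := by simp; omega
      rw [hdist_eq_sum _ _ (by rw [hlen1, hlen2]), hlen1]
      refine Finset.sum_congr rfl (fun t ht => ?_)
      rw [getD_slice s c h t (mem_range.mp ht) (by omega),
        getD_slice s (c + h) h t (mem_range.mp ht) (by omega)]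
    rw [hd]; exact hle
  · have h1 : s.drop c = (s.drop c).take h ++ s.drop (c + h) := by
      rw [← List.drop_drop]; rw [List.take_append_drop]
    have h2 : s.drop (c + h) = (s.drop (c + h)).take h ++ s.drop (c + 2 * h) := by
      have := (List.take_append_drop h (s.drop (c + h))).symm
      rwa [List.drop_drop, show c + h + h = c + 2 * h by ring] at this
    have h3 : s.drop c = (s.drop c).take h
        ++ ((s.drop (c + h)).take h ++ s.drop (c + 2 * h)) := by
      rw [← h2]; exact h1
    conv_lhs => rw [← List.take_append_drop c s, h3]
    simp [List.append_assoc]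

theorem beta_repeat_exists (β : ℝ) (hβ : 1 / 2 < β) (k : ℕ)
    (hk : (2 * β + 1) / (2 * β - 1) ≤ (k : ℝ)) (n : ℕ) (hn : k ^ 2 ≤ n)
    (s : List Bool) (hs : s.length = n) :
    ∃ ℓ : ℕ, 1 ≤ ℓ ∧ ℓ ≤ k ∧ HasBetaRepeat β (ℓ * (n / k ^ 2)) s := by
  have hd : (0:ℝ) < 2 * β - 1 := by linarith
  have hβ0 : (0:ℝ) < β := by linarith
  -- k ≥ 2
  have hk1R : (1:ℝ) < k := by
    have h1 : (1:ℝ) < (2 * β + 1) / (2 * β - 1) := by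
      rw [lt_div_iff₀ hd]; linarith
    linarith
  have hk2 : 2 ≤ k := by
    have : (1:ℕ) < k := by exact_mod_cast hk1R
    omega
  have hb2 : (k:ℝ) + 1 ≤ 2 * β * ((k:ℝ) - 1) := by
    rw [div_le_iff₀ hd] at hk
    nlinarith
  set m := n / k ^ 2 with hmdef
  have hm1 : 1 ≤ m := (Nat.one_le_div_iff (by positivity)).mpr hn
  have hk2m : k ^ 2 * m ≤ n := by
    rw [hmdef, mul_comm]; exact Nat.div_mul_le_self n (k ^ 2)
  by_contra hcon
  push_neg at hcon
  have hno : ∀ ℓ, 1 ≤ ℓ → ℓ ≤ k → ¬ HasBetaRepeat β (ℓ * m) s := by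
    intro ℓ h1 h2 h3
    exact (hcon ℓ h1 h2) h3
  -- window lemma in this context
  have window : ∀ ℓ c, 1 ≤ ℓ → ℓ ≤ k → c + 2 * (ℓ * m) ≤ n →
      β * (ℓ * m : ℕ) < ((∑ t ∈ range (ℓ * m),
        (if s.getD (c + t) false = s.getD (c + (ℓ * m) + t) false then (0:ℕ) else 1) : ℕ) : ℝ) := by
    intro ℓ c h1 h2 h3
    exact window_lb β s (ℓ * m) c (by omega) (hno ℓ h1 h2)
  set P := k * (k - 1) * m with hPdef
  -- per-pair lower bound
  have pairlow : ∀ j ∈ range (k + 1), ∀ i ∈ range j,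
      β * ((k:ℝ) - 1) ^ 2 * m < ((∑ p ∈ range P,
        (if s.getD (p + i * m) false = s.getD (p + j * m) false then (0:ℕ) else 1) : ℕ) : ℝ) := by
    intro j hj i hi
    rw [mem_range] at hj hi
    set ℓ := j - i with hldef
    have hl1 : 1 ≤ ℓ := by omega
    have hlk : ℓ ≤ k := by omega
    have hjm : j * m = i * m + ℓ * m := by
      rw [← Nat.add_mul]
      congr 1
      omega
    set N := k * (k - 1) / ℓ with hNdef
    have hNl : N * ℓ ≤ k * (k - 1) := Nat.div_mul_le_self _ _
    have hmod := Nat.div_add_mod (k * (k - 1)) ℓ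
    have hmodlt : (k * (k - 1)) % ℓ < ℓ := Nat.mod_lt _ (by omega)
    have hNpos : 0 < N := by
      apply Nat.div_pos _ (by omega)
      calc ℓ ≤ k := hlk
        _ = k * 1 := (mul_one k).symm
        _ ≤ k * (k - 1) := by gcongr; omega
    have hNk : (k - 1) ^ 2 ≤ N * ℓ := by
      obtain ⟨r0, hr0lt, hr0eq⟩ : ∃ r0, r0 < ℓ ∧ ℓ * N + r0 = k * (k - 1) :=
        ⟨(k * (k - 1)) % ℓ, hmodlt, by rw [hNdef]; exact Nat.div_add_mod _ _⟩
      zify [show 1 ≤ k by omega] at hr0eq ⊢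
      have h3 : (ℓ:ℤ) ≤ (k:ℤ) := by exact_mod_cast hlk
      have h4 : (2:ℤ) ≤ (k:ℤ) := by exact_mod_cast hk2
      have h5 : ((r0:ℤ)) < (ℓ:ℤ) := by exact_mod_cast hr0lt
      nlinarith
    -- window sums
    have hwin : ∀ r ∈ range N,
        β * (ℓ * m : ℕ) < ((∑ t ∈ range (ℓ * m),
          (if s.getD (r * (ℓ * m) + t + i * m) false
            = s.getD (r * (ℓ * m) + t + j * m) false then (0:ℕ) else 1) : ℕ) : ℝ) := by
      intro r hr
      rw [mem_range] at hr
      have hcval : (i * m + r * (ℓ * m)) + 2 * (ℓ * m) ≤ n := by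
        calc (i * m + r * (ℓ * m)) + 2 * (ℓ * m)
            = (i * m + ℓ * m) + (r + 1) * (ℓ * m) := by ring
          _ = j * m + (r + 1) * (ℓ * m) := by rw [hjm]
          _ ≤ k * m + N * (ℓ * m) := by gcongr <;> omega
          _ = k * m + (N * ℓ) * m := by ring
          _ ≤ k * m + (k * (k - 1)) * m := by gcongr
          _ = (k * (1 + (k - 1))) * m := by ring
          _ = k ^ 2 * m := by rw [show 1 + (k - 1) = k by omega]; ring
          _ ≤ n := hk2m
      have h := window ℓ (i * m + r * (ℓ * m)) hl1 hlk hcval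
      have e1 : ∀ t : ℕ, r * (ℓ * m) + t + i * m = (i * m + r * (ℓ * m)) + t := fun t => by ring
      have e2 : ∀ t : ℕ, r * (ℓ * m) + t + j * m = (i * m + r * (ℓ * m)) + ℓ * m + t := by
        intro t; rw [hjm]; ring
      have hsumeq : (∑ t ∈ range (ℓ * m),
          (if s.getD (r * (ℓ * m) + t + i * m) false
            = s.getD (r * (ℓ * m) + t + j * m) false then (0:ℕ) else 1))
          = ∑ t ∈ range (ℓ * m),
          (if s.getD ((i * m + r * (ℓ * m)) + t) false
            = s.getD ((i * m + r * (ℓ * m)) + ℓ * m + t) false then (0:ℕ) else 1) :=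
        Finset.sum_congr rfl (fun t _ => by rw [e1 t, e2 t])
      rw [hsumeq]
      exact h
    have hsubset : (∑ p ∈ range (N * (ℓ * m)),
          (if s.getD (p + i * m) false = s.getD (p + j * m) false then (0:ℕ) else 1))
        ≤ ∑ p ∈ range P,
          (if s.getD (p + i * m) false = s.getD (p + j * m) false then (0:ℕ) else 1) := by
      apply Finset.sum_le_sum_of_subset
      apply Finset.range_subset_range.mpr
      calc N * (ℓ * m) = (N * ℓ) * m := by ring
        _ ≤ k * (k - 1) * m := by gcongr
    have hsplit : (∑ p ∈ range (N * (ℓ * m)),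
          (if s.getD (p + i * m) false = s.getD (p + j * m) false then (0:ℕ) else 1))
        = ∑ r ∈ range N, ∑ t ∈ range (ℓ * m),
          (if s.getD (r * (ℓ * m) + t + i * m) false
            = s.getD (r * (ℓ * m) + t + j * m) false then (0:ℕ) else 1) :=
      sum_range_mul_split _ N (ℓ * m)
    have hstrict : (N : ℝ) * (β * (ℓ * m : ℕ)) < ((∑ r ∈ range N, ∑ t ∈ range (ℓ * m),
          (if s.getD (r * (ℓ * m) + t + i * m) false
            = s.getD (r * (ℓ * m) + t + j * m) false then (0:ℕ) else 1) : ℕ) : ℝ) := by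
      have hlt := Finset.sum_lt_sum_of_nonempty (s := range N)
        (f := fun _ => β * ((ℓ * m : ℕ) : ℝ)) (g := fun r => ((∑ t ∈ range (ℓ * m),
          (if s.getD (r * (ℓ * m) + t + i * m) false
            = s.getD (r * (ℓ * m) + t + j * m) false then (0:ℕ) else 1) : ℕ) : ℝ))
        (Finset.nonempty_range_iff.mpr (by omega)) (fun r hr => hwin r hr)
      rw [Finset.sum_const, Finset.card_range, nsmul_eq_mul] at hlt
      calc (N : ℝ) * (β * (ℓ * m : ℕ)) = N • (β * ((ℓ * m : ℕ) : ℝ)) := by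
            rw [nsmul_eq_mul]
        _ < _ := by
            rw [nsmul_eq_mul]
            refine lt_of_lt_of_le hlt (le_of_eq ?_)
            rw [Nat.cast_sum]
    have hNkR : ((k:ℝ) - 1) ^ 2 ≤ (N : ℝ) * ℓ := by
      have hcast2 : (((k - 1) ^ 2 : ℕ) : ℝ) ≤ ((N * ℓ : ℕ) : ℝ) := by exact_mod_cast hNk
      push_cast [Nat.cast_sub (show 1 ≤ k by omega)] at hcast2
      exact hcast2
    have hcast : β * ((k:ℝ) - 1) ^ 2 * m ≤ (N : ℝ) * (β * (ℓ * m : ℕ)) := by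
      have hm0 : (0:ℝ) ≤ m := by positivity
      have step : β * ((k:ℝ) - 1) ^ 2 * m ≤ β * ((N : ℝ) * ℓ) * m := by
        apply mul_le_mul_of_nonneg_right _ hm0
        exact mul_le_mul_of_nonneg_left hNkR (le_of_lt hβ0)
      calc β * ((k:ℝ) - 1) ^ 2 * m ≤ β * ((N : ℝ) * ℓ) * m := step
        _ = (N : ℝ) * (β * (ℓ * m : ℕ)) := by push_cast; ring
    calc β * ((k:ℝ) - 1) ^ 2 * m ≤ (N : ℝ) * (β * (ℓ * m : ℕ)) := hcast
      _ < _ := hstrict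
      _ ≤ _ := by rw [← hsplit]; exact_mod_cast hsubset
  -- total sum double counting
  have hupper : ((∑ p ∈ range P, ∑ j ∈ range (k + 1), ∑ i ∈ range j,
      (if s.getD (p + i * m) false = s.getD (p + j * m) false then (0:ℕ) else 1) : ℕ) : ℝ) * 4
      ≤ (P : ℝ) * ((k : ℝ) + 1) ^ 2 := by
    have hp : ∀ p : ℕ, ((∑ j ∈ range (k + 1), ∑ i ∈ range j,
        (if s.getD (p + i * m) false = s.getD (p + j * m) false then (0:ℕ) else 1) : ℕ) : ℝ) * 4
        ≤ ((k : ℝ) + 1) ^ 2 := by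
      intro p
      have h0 := pair_count (fun i => s.getD (p + i * m) false) (k + 1)
      exact_mod_cast h0
    calc ((∑ p ∈ range P, ∑ j ∈ range (k + 1), ∑ i ∈ range j,
          (if s.getD (p + i * m) false = s.getD (p + j * m) false then (0:ℕ) else 1) : ℕ) : ℝ) * 4
        = ∑ p ∈ range P, ((∑ j ∈ range (k + 1), ∑ i ∈ range j,
          (if s.getD (p + i * m) false = s.getD (p + j * m) false then (0:ℕ) else 1) : ℕ) : ℝ) * 4 := by
          rw [Nat.cast_sum, Finset.sum_mul]
      _ ≤ ∑ _p ∈ range P, ((k : ℝ) + 1) ^ 2 := Finset.sum_le_sum (fun p _ => hp p)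
      _ = (P : ℝ) * ((k : ℝ) + 1) ^ 2 := by
          rw [Finset.sum_const, Finset.card_range, nsmul_eq_mul]
  have hswap : (∑ p ∈ range P, ∑ j ∈ range (k + 1), ∑ i ∈ range j,
      (if s.getD (p + i * m) false = s.getD (p + j * m) false then (0:ℕ) else 1))
      = ∑ j ∈ range (k + 1), ∑ i ∈ range j, ∑ p ∈ range P,
      (if s.getD (p + i * m) false = s.getD (p + j * m) false then (0:ℕ) else 1) := by
    rw [Finset.sum_comm]
    exact Finset.sum_congr rfl (fun j _ => Finset.sum_comm)
  have hlower : (∑ j ∈ range (k + 1), (j : ℝ)) * (β * ((k:ℝ) - 1) ^ 2 * m)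
      < ((∑ p ∈ range P, ∑ j ∈ range (k + 1), ∑ i ∈ range j,
      (if s.getD (p + i * m) false = s.getD (p + j * m) false then (0:ℕ) else 1) : ℕ) : ℝ) := by
    rw [hswap, Nat.cast_sum, Finset.sum_mul]
    apply Finset.sum_lt_sum
    · intro j hj
      rw [Nat.cast_sum]
      calc (j : ℝ) * (β * ((k:ℝ) - 1) ^ 2 * m) = ∑ _i ∈ range j, (β * ((k:ℝ) - 1) ^ 2 * m) := by
            rw [Finset.sum_const, Finset.card_range, nsmul_eq_mul]
        _ ≤ _ := Finset.sum_le_sum (fun i hi => le_of_lt (pairlow j hj i hi))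
    · refine ⟨1, Finset.mem_range.mpr (by omega), ?_⟩
      have h1 := pairlow 1 (Finset.mem_range.mpr (by omega)) 0 (Finset.mem_range.mpr (by omega))
      rw [Nat.cast_sum]
      calc ((1:ℕ) : ℝ) * (β * ((k:ℝ) - 1) ^ 2 * m) = β * ((k:ℝ) - 1) ^ 2 * m := by
            rw [Nat.cast_one, one_mul]
        _ < _ := by rw [Finset.sum_range_one]; exact h1
  -- final contradiction
  have hgN : (∑ j ∈ range (k + 1), j) * 2 = (k + 1) * k := by
    simpa using Finset.sum_range_id_mul_two (k + 1)
  have hgauss : (∑ j ∈ range (k + 1), (j : ℝ)) * 2 = ((k:ℝ) + 1) * k := by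
    have : (((∑ j ∈ range (k + 1), j) * 2 : ℕ) : ℝ) = (((k + 1) * k : ℕ) : ℝ) := by
      exact_mod_cast congrArg (Nat.cast : ℕ → ℝ) hgN
    push_cast at this
    convert this using 2
  have hPR : (P : ℝ) = (k:ℝ) * ((k:ℝ) - 1) * m := by
    rw [hPdef]
    push_cast [Nat.cast_sub (show 1 ≤ k by omega)]
    ring
  have h2R : (2:ℝ) ≤ (k:ℝ) := by exact_mod_cast hk2
  have hmR : (1:ℝ) ≤ (m:ℝ) := by exact_mod_cast hm1
  have hfac : (0:ℝ) ≤ (k:ℝ) * ((k:ℝ) + 1) * ((k:ℝ) - 1) * m :=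
    mul_nonneg (mul_nonneg (mul_nonneg (by linarith) (by linarith)) (by linarith)) (by linarith)
  have hdiff : (0:ℝ) ≤ 2 * β * ((k:ℝ) - 1) - ((k:ℝ) + 1) := by linarith
  have hprod := mul_nonneg hfac hdiff
  have e1 : 4 * ((∑ j ∈ range (k + 1), (j : ℝ)) * (β * ((k:ℝ) - 1) ^ 2 * m))
      = 2 * (((k:ℝ) + 1) * k) * (β * ((k:ℝ) - 1) ^ 2 * m) := by
    calc 4 * ((∑ j ∈ range (k + 1), (j : ℝ)) * (β * ((k:ℝ) - 1) ^ 2 * m))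
        = 2 * ((∑ j ∈ range (k + 1), (j : ℝ)) * 2) * (β * ((k:ℝ) - 1) ^ 2 * m) := by ring
      _ = 2 * (((k:ℝ) + 1) * k) * (β * ((k:ℝ) - 1) ^ 2 * m) := by rw [hgauss]
  have key : (P : ℝ) * ((k : ℝ) + 1) ^ 2
      ≤ 4 * ((∑ j ∈ range (k + 1), (j : ℝ)) * (β * ((k:ℝ) - 1) ^ 2 * m)) := by
    rw [hPR, e1]
    nlinarith [hprod]
  linarith [hupper, hlower, key]
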